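/- Let Q : S × A → ℝ with S, A finite, π the greedy policy with respect to Q, T*_k the k-persistent Bellman optimal operator with discount γ^k, and Q^π_k the fixed point of the k-persistent expectation operator T^π_k for π. Then Q^π_k − Q = (Id − γ^k P^π_k)^{-1} (T*_k Q − Q), and consequently for any initial distribution ρ over states, J^{ρ,π}_k ≥ J^ρ − (1/(1−γ^k)) ‖T*_k Q − Q‖_{1,η^{ρ,π}}, where J^ρ = ∑_s ρ(s) max_a Q(s,a), J^{ρ,π}_k = ∑_s ρ(s) ∑_a π(a|s) Q^π_k(s,a), and η^{ρ,π} = (1−γ^k) (ρπ) (Id − γ^k P^π_k)^{-1} is the normalized discounted state-action occupancy. -/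

import Mathlib

theorem stmt_13 {S A : Type*} [Fintype S] [Fintype A] [Nonempty A]
    (Pk : S → A → S → ℝ)
    (hP0 : ∀ s a s', 0 ≤ Pk s a s') (hP1 : ∀ s a, ∑ s', Pk s a s' = 1)
    (rk : S × A → ℝ) (γ : ℝ) (hγ0 : 0 ≤ γ) (hγ1 : γ < 1)
    (k : ℕ) (hk : 1 ≤ k)
    (Q : S × A → ℝ) (π : S → A)
    (hgreedy : ∀ s a, Q (s, a) ≤ Q (s, π s))
    (Pπk : (S × A → ℝ) → (S × A → ℝ))
    (hPπk : ∀ f sa, Pπk f sa = ∑ s', Pk sa.1 sa.2 s' * f (s', π s'))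
    (Tπk : (S × A → ℝ) → (S × A → ℝ)) (hTπk : ∀ f, Tπk f = rk + γ ^ k • Pπk f)
    (Tstark : (S × A → ℝ) → (S × A → ℝ))
    (hTstark : ∀ f sa, Tstark f sa =
      rk sa + γ ^ k * ∑ s', Pk sa.1 sa.2 s' *
        (Finset.univ.sup' Finset.univ_nonempty fun a' => f (s', a')))
    (Qπk : S × A → ℝ) (hQπk : Tπk Qπk = Qπk)
    (ρ : S → ℝ) (hρ0 : ∀ s, 0 ≤ ρ s) (hρ1 : ∑ s, ρ s = 1) :
    (Qπk - Q = ∑' m : ℕ, γ ^ (k * m) • Pπk^[m] (Tstark Q - Q)) ∧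
      (∑ s, ρ s * Qπk (s, π s) ≥
        (∑ s, ρ s * (Finset.univ.sup' Finset.univ_nonempty fun a => Q (s, a))) -
          (1 / (1 - γ ^ k)) *
            ((1 - γ ^ k) * ∑' m : ℕ, γ ^ (k * m) *
              ∑ s, ρ s * (Pπk^[m] fun x => |Tstark Q x - Q x|) (s, π s))) := by
  classical
  have hγk0 : (0:ℝ) ≤ γ ^ k := pow_nonneg hγ0 k
  have hγk1 : γ ^ k < 1 := pow_lt_one₀ hγ0 hγ1 (by omega)
  set ε : S × A → ℝ := Tstark Q - Q with hε
  -- sup' = Q(s, π s)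
  have hsup : ∀ s, (Finset.univ.sup' Finset.univ_nonempty fun a => Q (s, a)) = Q (s, π s) := by
    intro s
    apply le_antisymm
    · exact Finset.sup'_le Finset.univ_nonempty (fun a => Q (s, a)) fun a _ => hgreedy s a
    · exact Finset.le_sup' (fun a => Q (s, a)) (Finset.mem_univ (π s))
  -- recursion: Qπk - Q = ε + γ^k • Pπk (Qπk - Q)
  have hrec : ∀ sa, (Qπk - Q) sa = ε sa + γ ^ k * (Pπk (Qπk - Q)) sa := by
    intro sa
    have h1 : Qπk sa = rk sa + γ ^ k * (Pπk Qπk) sa := by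
      conv_lhs => rw [← hQπk, hTπk]
      simp [Pi.add_apply, Pi.smul_apply, smul_eq_mul]
    have h2 : ε sa = rk sa + γ ^ k * (Pπk Q) sa - Q sa := by
      simp only [hε, Pi.sub_apply, hTstark, hPπk]
      have : ∀ s', Pk sa.1 sa.2 s' *
          (Finset.univ.sup' Finset.univ_nonempty fun a' => Q (s', a')) =
          Pk sa.1 sa.2 s' * Q (s', π s') := by
        intro s'; rw [hsup]
      rw [Finset.sum_congr rfl fun s' _ => this s']
    have h3 : (Pπk (Qπk - Q)) sa = (Pπk Qπk) sa - (Pπk Q) sa := by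
      simp only [hPπk, Pi.sub_apply, mul_sub, Finset.sum_sub_distrib]
    simp only [Pi.sub_apply] at *
    rw [h1, h2, h3]; ring
  -- abs domination
  have habs : ∀ (f : S × A → ℝ) (m : ℕ) sa,
      |(Pπk^[m] f) sa| ≤ (Pπk^[m] fun x => |f x|) sa := by
    intro f m
    induction m with
    | zero => intro sa; simp
    | succ n ih =>
      intro sa
      rw [Function.iterate_succ_apply', Function.iterate_succ_apply', hPπk, hPπk]
      calc |∑ s', Pk sa.1 sa.2 s' * (Pπk^[n] f) (s', π s')|
          ≤ ∑ s', |Pk sa.1 sa.2 s' * (Pπk^[n] f) (s', π s')| :=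
            Finset.abs_sum_le_sum_abs _ _
        _ ≤ ∑ s', Pk sa.1 sa.2 s' * (Pπk^[n] fun x => |f x|) (s', π s') := by
            apply Finset.sum_le_sum
            intro s' _
            rw [abs_mul, abs_of_nonneg (hP0 _ _ _)]
            exact mul_le_mul_of_nonneg_left (ih _) (hP0 _ _ _)
  -- uniform bound
  have hbound : ∀ (f : S × A → ℝ) (C : ℝ), (∀ sa, |f sa| ≤ C) →
      ∀ (m : ℕ) sa, |(Pπk^[m] f) sa| ≤ C := by
    intro f C hC m
    induction m with
    | zero => intro sa; simpa using hC sa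
    | succ n ih =>
      intro sa
      rw [Function.iterate_succ_apply', hPπk]
      calc |∑ s', Pk sa.1 sa.2 s' * (Pπk^[n] f) (s', π s')|
          ≤ ∑ s', |Pk sa.1 sa.2 s' * (Pπk^[n] f) (s', π s')| :=
            Finset.abs_sum_le_sum_abs _ _
        _ ≤ ∑ s', Pk sa.1 sa.2 s' * C := by
            apply Finset.sum_le_sum
            intro s' _
            rw [abs_mul, abs_of_nonneg (hP0 _ _ _)]
            exact mul_le_mul_of_nonneg_left (ih _) (hP0 _ _ _)
        _ = C := by rw [← Finset.sum_mul, hP1, one_mul]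
  set C : ℝ := ‖ε‖ with hCdef
  have hεC : ∀ sa, |ε sa| ≤ C := by
    intro sa
    simpa [Real.norm_eq_abs] using norm_le_pi_norm ε sa
  have hεC' : ∀ sa, |(fun x => |ε x|) sa| ≤ C := by
    intro sa; simpa using hεC sa
  have hC0 : 0 ≤ C := norm_nonneg _
  -- linearity of Pπk on iterates
  have hPadd : ∀ (f g : S × A → ℝ), Pπk (f + g) = Pπk f + Pπk g := by
    intro f g; funext sa
    simp [hPπk, mul_add, Finset.sum_add_distrib]
  have hPsmul : ∀ (c : ℝ) (f : S × A → ℝ), Pπk (c • f) = c • Pπk f := by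
    intro c f; funext sa
    simp only [hPπk, Pi.smul_apply, smul_eq_mul, Finset.mul_sum]
    exact Finset.sum_congr rfl fun i _ => by ring
  have hIadd : ∀ (m : ℕ) (f g : S × A → ℝ), Pπk^[m] (f + g) = Pπk^[m] f + Pπk^[m] g := by
    intro m
    induction m with
    | zero => intro f g; simp
    | succ n ih =>
      intro f g
      rw [Function.iterate_succ_apply, hPadd, ih, Function.iterate_succ_apply,
        Function.iterate_succ_apply]
  have hIsmul : ∀ (m : ℕ) (c : ℝ) (f : S × A → ℝ), Pπk^[m] (c • f) = c • Pπk^[m] f := by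
    intro m
    induction m with
    | zero => intro c f; simp
    | succ n ih =>
      intro c f
      rw [Function.iterate_succ_apply, hPsmul, ih, Function.iterate_succ_apply]
  -- partial sums identity
  have hpartial : ∀ n : ℕ, Qπk - Q =
      (∑ m ∈ Finset.range n, γ ^ (k * m) • Pπk^[m] ε) + γ ^ (k * n) • Pπk^[n] (Qπk - Q) := by
    intro n
    induction n with
    | zero => simp
    | succ n ih =>
      rw [Finset.sum_range_succ, Nat.mul_succ]
      have hstep : Pπk^[n] (Qπk - Q) = Pπk^[n] ε + γ ^ k • Pπk^[n+1] (Qπk - Q) := by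
        have h0 : (Qπk - Q) = ε + γ ^ k • Pπk (Qπk - Q) := by
          funext sa; simpa using hrec sa
        rw [Function.iterate_succ_apply]
        conv_lhs => rw [h0]
        rw [hIadd, hIsmul]
      conv_lhs => rw [ih]
      rw [hstep, smul_add, smul_smul, ← pow_add]
      abel
  -- pointwise summability
  have hterm : ∀ (m : ℕ) sa, |γ ^ (k * m) * (Pπk^[m] ε) sa| ≤ (γ ^ k) ^ m * C := by
    intro m sa
    rw [abs_mul, abs_of_nonneg (pow_nonneg hγ0 _), pow_mul]
    exact mul_le_mul_of_nonneg_left (hbound ε C hεC m sa) (pow_nonneg hγk0 _)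
  have hgeo : Summable fun m : ℕ => (γ ^ k) ^ m * C :=
    (summable_geometric_of_lt_one hγk0 hγk1).mul_right C
  have hsumm_pt : ∀ sa, Summable fun m : ℕ => γ ^ (k * m) * (Pπk^[m] ε) sa := by
    intro sa
    apply Summable.of_norm_bounded hgeo
    intro m
    rw [Real.norm_eq_abs]
    exact hterm m sa
  have hsumm : Summable fun m : ℕ => γ ^ (k * m) • Pπk^[m] ε := by
    rw [Pi.summable]
    intro sa
    simpa [smul_eq_mul] using hsumm_pt sa
  -- pointwise limit
  have hlim : ∀ sa, (Qπk - Q) sa = ∑' m : ℕ, γ ^ (k * m) * (Pπk^[m] ε) sa := by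
    intro sa
    have h1 : Filter.Tendsto (fun n => ∑ m ∈ Finset.range n, γ ^ (k * m) * (Pπk^[m] ε) sa)
        Filter.atTop (nhds (∑' m : ℕ, γ ^ (k * m) * (Pπk^[m] ε) sa)) :=
      (hsumm_pt sa).hasSum.tendsto_sum_nat
    have h2 : Filter.Tendsto (fun n => ∑ m ∈ Finset.range n, γ ^ (k * m) * (Pπk^[m] ε) sa)
        Filter.atTop (nhds ((Qπk - Q) sa)) := by
      have heq : ∀ n, ∑ m ∈ Finset.range n, γ ^ (k * m) * (Pπk^[m] ε) sa
          = (Qπk - Q) sa - γ ^ (k * n) * (Pπk^[n] (Qπk - Q)) sa := by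
        intro n
        have := congrFun (hpartial n) sa
        simp only [Pi.add_apply, Finset.sum_apply, Pi.smul_apply, smul_eq_mul] at this
        linarith [this]
      rw [show (fun n => ∑ m ∈ Finset.range n, γ ^ (k * m) * (Pπk^[m] ε) sa)
          = fun n => (Qπk - Q) sa - γ ^ (k * n) * (Pπk^[n] (Qπk - Q)) sa from funext heq]
      have hrem : Filter.Tendsto (fun n => γ ^ (k * n) * (Pπk^[n] (Qπk - Q)) sa)
          Filter.atTop (nhds 0) := by
        have hD : ∀ sa', |(Qπk - Q) sa'| ≤ ‖Qπk - Q‖ := by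
          intro sa'; simpa [Real.norm_eq_abs] using norm_le_pi_norm (Qπk - Q) sa'
        have hb : ∀ n, ‖γ ^ (k * n) * (Pπk^[n] (Qπk - Q)) sa‖ ≤ (γ ^ k) ^ n * ‖Qπk - Q‖ := by
          intro n
          rw [Real.norm_eq_abs, abs_mul, abs_of_nonneg (pow_nonneg hγ0 _), pow_mul]
          exact mul_le_mul_of_nonneg_left (hbound _ _ hD n sa) (pow_nonneg hγk0 _)
        have h0 : Filter.Tendsto (fun n : ℕ => (γ ^ k) ^ n * ‖Qπk - Q‖)
            Filter.atTop (nhds 0) := by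
          rw [show (0:ℝ) = 0 * ‖Qπk - Q‖ by ring]
          exact (tendsto_pow_atTop_nhds_zero_of_lt_one hγk0 hγk1).mul_const _
        exact squeeze_zero_norm hb h0
      simpa using (tendsto_const_nhds.sub hrem)
    exact tendsto_nhds_unique h2 h1
  have part1 : Qπk - Q = ∑' m : ℕ, γ ^ (k * m) • Pπk^[m] (Tstark Q - Q) := by
    funext sa
    rw [← hε, tsum_apply hsumm]
    simpa [smul_eq_mul] using hlim sa
  refine ⟨part1, ?_⟩
  -- Part 2
  have hne : (1:ℝ) - γ ^ k ≠ 0 := by linarith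
  rw [show (1 / (1 - γ ^ k)) * ((1 - γ ^ k) * ∑' m : ℕ, γ ^ (k * m) *
      ∑ s, ρ s * (Pπk^[m] fun x => |Tstark Q x - Q x|) (s, π s)) =
      ∑' m : ℕ, γ ^ (k * m) * ∑ s, ρ s * (Pπk^[m] fun x => |Tstark Q x - Q x|) (s, π s) by
    field_simp]
  have habs' : (fun x => |Tstark Q x - Q x|) = fun x => |ε x| := by
    funext x; simp [hε]
  rw [habs']
  simp only [hsup]
  -- define series
  set g : ℕ → ℝ := fun m => γ ^ (k * m) * ∑ s, ρ s * (Pπk^[m] fun x => |ε x|) (s, π s) with hg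
  set a : ℕ → ℝ := fun m => γ ^ (k * m) * ∑ s, ρ s * (Pπk^[m] ε) (s, π s) with ha
  have hab : ∀ (f : S × A → ℝ), (∀ sa, |f sa| ≤ C) → ∀ m,
      |γ ^ (k * m) * ∑ s, ρ s * (Pπk^[m] f) (s, π s)| ≤ (γ ^ k) ^ m * C := by
    intro f hf m
    rw [abs_mul, abs_of_nonneg (pow_nonneg hγ0 _), pow_mul]
    apply mul_le_mul_of_nonneg_left _ (pow_nonneg hγk0 _)
    calc |∑ s, ρ s * (Pπk^[m] f) (s, π s)| ≤ ∑ s, |ρ s * (Pπk^[m] f) (s, π s)| :=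
        Finset.abs_sum_le_sum_abs _ _
      _ ≤ ∑ s, ρ s * C := by
          apply Finset.sum_le_sum
          intro s _
          rw [abs_mul, abs_of_nonneg (hρ0 s)]
          exact mul_le_mul_of_nonneg_left (hbound f C hf m _) (hρ0 s)
      _ = C := by rw [← Finset.sum_mul, hρ1, one_mul]
  have hga : Summable g := by
    apply Summable.of_norm_bounded hgeo
    intro m
    rw [Real.norm_eq_abs]
    exact hab _ hεC' m
  have haa : Summable a := by
    apply Summable.of_norm_bounded hgeo
    intro m
    rw [Real.norm_eq_abs]
    exact hab ε hεC m
  have hge : ∀ m, -g m ≤ a m := by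
    intro m
    simp only [hg, ha]
    rw [neg_mul_eq_mul_neg]
    apply mul_le_mul_of_nonneg_left _ (pow_nonneg hγ0 _)
    rw [← Finset.sum_neg_distrib]
    apply Finset.sum_le_sum
    intro s _
    rw [← mul_neg]
    apply mul_le_mul_of_nonneg_left _ (hρ0 s)
    have h := habs ε m (s, π s)
    have h2 := neg_abs_le ((Pπk^[m] ε) (s, π s))
    linarith
  have hkey : ∑ s, ρ s * (Qπk (s, π s) - Q (s, π s)) = ∑' m : ℕ, a m := by
    have h1 : ∀ s, ρ s * (Qπk (s, π s) - Q (s, π s))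
        = ∑' m : ℕ, ρ s * (γ ^ (k * m) * (Pπk^[m] ε) (s, π s)) := by
      intro s
      rw [tsum_mul_left]
      congr 1
      have := hlim (s, π s)
      simp only [Pi.sub_apply] at this
      rw [this]
    rw [Finset.sum_congr rfl fun s _ => h1 s]
    rw [← Summable.tsum_finsetSum (fun s _ => Summable.mul_left _ (hsumm_pt (s, π s)))]
    apply tsum_congr
    intro m
    simp only [ha]
    rw [Finset.mul_sum]
    exact Finset.sum_congr rfl fun s _ => by ring
  have hfinal : -∑' m : ℕ, g m ≤ ∑' m : ℕ, a m := by
    rw [← tsum_neg]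
    exact Summable.tsum_le_tsum hge hga.neg haa
  rw [← hkey] at hfinal
  have : ∑ s, ρ s * (Qπk (s, π s) - Q (s, π s))
      = ∑ s, ρ s * Qπk (s, π s) - ∑ s, ρ s * Q (s, π s) := by
    rw [← Finset.sum_sub_distrib]
    congr 1; funext s; ring
  rw [this] at hfinal
  linarith
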